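/- (Two-alphabet phase retrieval) Let N ≥ 1 and let α, β be real numbers such that α², β², αβ are linearly independent over ℚ. For signals x, x' ∈ {α, β}^N, with S_α(x) = {i : x[i] = α}, S_β(x) = {j : x[j] = β} and similarly for x', the following are equivalent: (i) a_x = a_{x'}; (ii) S_α(x) and S_α(x') are homometric; (iii) S_β(x) and S_β(x') are homometric; (iv) the ordered partitions (S_α(x), S_β(x)) and (S_α(x'), S_β(x')) are homometric. -/

import Mathlib

/-- The cyclic distance `d(i,j) = min(|i-j|, N-|i-j|)` on `ZMod N`. -/
def cdist {N : ℕ} (i j : ZMod N) : ℕ := min (i - j).val (j - i).val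

/-- The cyclic difference multiset `A - B = {d(i,j) : i ∈ A, j ∈ B}`. -/
def diffMS {N : ℕ} (A B : Finset (ZMod N)) : Multiset ℕ :=
  (A ×ˢ B).val.map fun p => cdist p.1 p.2

/-- The self difference multiset `A - A = {d(i,j) : i ≤ j ∈ A}`. -/
def selfDiffMS {N : ℕ} (A : Finset (ZMod N)) : Multiset ℕ :=
  ((A ×ˢ A).filter fun p => p.1.val ≤ p.2.val).val.map fun p => cdist p.1 p.2

/-- Two subsets are homometric if they have the same self difference multiset. -/
def Homometric {N : ℕ} (A B : Finset (ZMod N)) : Prop :=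
  selfDiffMS A = selfDiffMS B

/-- `σ : ZMod N → ZMod N` is given by the action of an element of the dihedral
group `D_{2N}`, generated by the rotation `i ↦ i + 1` and the reflection `i ↦ -i`. -/
def IsDihedral {N : ℕ} (σ : ZMod N → ZMod N) : Prop :=
  (∃ k : ZMod N, ∀ i, σ i = i + k) ∨ (∃ k : ZMod N, ∀ i, σ i = -i + k)

/-- Two subsets are equivalent if one is the image of the other under `D_{2N}`. -/
def EquivSets {N : ℕ} (A B : Finset (ZMod N)) : Prop :=
  ∃ σ : ZMod N → ZMod N, IsDihedral σ ∧ B = A.image σ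

/-- An ordered partition of `[0, N-1]`: pairwise disjoint sets covering everything. -/
def IsPartitionOf {N K : ℕ} [NeZero N] (A : Fin K → Finset (ZMod N)) : Prop :=
  (∀ i j, i ≠ j → Disjoint (A i) (A j)) ∧ Finset.univ.biUnion A = Finset.univ

/-- Two ordered partitions are homometric if `A i - A j = B i - B j` for all pairs. -/
def HomometricPart {N K : ℕ} (A B : Fin K → Finset (ZMod N)) : Prop :=
  ∀ i j, diffMS (A i) (A j) = diffMS (B i) (B j)

/-- Two ordered partitions are equivalent if a single dihedral element maps one to the other. -/
def EquivPart {N K : ℕ} (A B : Fin K → Finset (ZMod N)) : Prop :=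
  ∃ σ : ZMod N → ZMod N, IsDihedral σ ∧ ∀ i, B i = (A i).image σ

/-- Two ordered partitions are pseudo-equivalent if each part is mapped by some
(possibly different) dihedral element. -/
def PseudoEquivPart {N K : ℕ} (A B : Fin K → Finset (ZMod N)) : Prop :=
  ∀ i, ∃ σ : ZMod N → ZMod N, IsDihedral σ ∧ B i = (A i).image σ

/-- The periodic autocorrelation `a_x[ℓ] = ∑ x[n] x[n+ℓ]`. -/
noncomputable def autocorr {N : ℕ} [NeZero N] (x : ZMod N → ℝ) (ℓ : ZMod N) : ℝ :=
  ∑ n : ZMod N, x n * x (n + ℓ)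

open Classical in
/-- The level set `{i : x[i] = a}` of a signal. -/
noncomputable def levelSet {N : ℕ} [NeZero N] (x : ZMod N → ℝ) (a : ℝ) : Finset (ZMod N) :=
  Finset.univ.filter fun i => x i = a

namespace TAP
open Finset
variable {N : ℕ}


variable {N : ℕ}

/-- correlation count -/
def Gc (A B : Finset (ZMod N)) (ℓ : ZMod N) : ℕ := (A.filter fun i => i + ℓ ∈ B).card

/-- distance count -/
def Sc (A B : Finset (ZMod N)) (d : ℕ) : ℕ :=
  ((A ×ˢ B).filter fun p => cdist p.1 p.2 = d).card

/-- ordered distance count -/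
def Hc (A : Finset (ZMod N)) (d : ℕ) : ℕ :=
  ((A ×ˢ A).filter fun p => p.1.val ≤ p.2.val ∧ cdist p.1 p.2 = d).card

lemma cdist_comm (i j : ZMod N) : cdist i j = cdist j i := min_comm _ _

lemma cdist_eq_zero_iff [NeZero N] {i j : ZMod N} : cdist i j = 0 ↔ i = j := by
  unfold cdist
  rw [Nat.min_eq_zero_iff, ZMod.val_eq_zero, ZMod.val_eq_zero, sub_eq_zero, sub_eq_zero]
  constructor
  · rintro (h | h) <;> simp [h]
  · intro h; simp [h]

lemma card_prod_filter [NeZero N] (A B : Finset (ZMod N)) (m : ZMod N) :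
    ((A ×ˢ B).filter fun p => p.2 - p.1 = m).card = Gc A B m := by
  apply Finset.card_nbij' (fun p => p.1) (fun i => (i, i + m))
  · intro p hp
    simp only [mem_coe, mem_filter, mem_product] at hp
    simp only [Gc, mem_coe, mem_filter]
    exact ⟨hp.1.1, by rw [← hp.2]; simpa using hp.1.2⟩
  · intro i hi
    simp only [mem_coe, Gc, mem_filter] at hi
    simp only [mem_coe, mem_filter, mem_product]
    exact ⟨⟨hi.1, hi.2⟩, by ring⟩
  · intro p hp
    simp only [mem_coe, mem_filter, mem_product] at hp
    have : p.1 + m = p.2 := by rw [← hp.2]; ring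
    exact Prod.ext rfl this
  · intro i _; rfl

lemma Gc_symm [NeZero N] (A : Finset (ZMod N)) (ℓ : ZMod N) :
    Gc A A (-ℓ) = Gc A A ℓ := by
  apply Finset.card_nbij' (fun i => i - ℓ) (fun j => j + ℓ)
  · intro i hi
    simp only [mem_coe, mem_filter] at hi ⊢
    constructor
    · simpa [sub_eq_add_neg] using hi.2
    · simpa using hi.1
  · intro j hj
    simp only [mem_coe, mem_filter] at hj ⊢
    exact ⟨hj.2, by simpa [sub_eq_add_neg] using hj.1⟩
  · intro i _; ring
  · intro j _; ring

lemma Gc_zero [NeZero N] (A : Finset (ZMod N)) : Gc A A 0 = A.card := by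
  simp [Gc, Finset.filter_true_of_mem]

lemma P1 [NeZero N] (A B : Finset (ZMod N)) (ℓ : ZMod N) :
    Gc A B ℓ + Gc A Bᶜ ℓ = A.card := by
  have h : Gc A Bᶜ ℓ = (A.filter fun i => ¬ (i + ℓ ∈ B)).card := by
    simp [Gc]
  rw [h]
  exact Finset.card_filter_add_card_filter_not _

lemma univ_filter_card [NeZero N] (B : Finset (ZMod N)) (ℓ : ZMod N) :
    ((univ : Finset (ZMod N)).filter fun i => i + ℓ ∈ B).card = B.card := by
  apply Finset.card_nbij' (fun i => i + ℓ) (fun j => j - ℓ)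
  · intro i hi; simp only [mem_coe, mem_filter] at hi; exact hi.2
  · intro j hj; simp only [mem_coe, mem_filter]; simpa using hj
  · intro i _; ring
  · intro j _; ring

lemma P2 [NeZero N] (A B : Finset (ZMod N)) (ℓ : ZMod N) :
    Gc A B ℓ + Gc Aᶜ B ℓ = B.card := by
  have h1 := univ_filter_card B ℓ
  have h2 := Finset.card_filter_add_card_filter_not
    (s := (univ : Finset (ZMod N)).filter fun i => i + ℓ ∈ B) (p := fun i => i ∈ A)
  have e1 : ((univ : Finset (ZMod N)).filter fun i => i + ℓ ∈ B).filter (fun i => i ∈ A)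
      = A.filter fun i => i + ℓ ∈ B := by
    ext i; simp [and_comm]
  have e2 : ((univ : Finset (ZMod N)).filter fun i => i + ℓ ∈ B).filter (fun i => ¬ (i ∈ A))
      = Aᶜ.filter fun i => i + ℓ ∈ B := by
    ext i; simp [and_comm]
  rw [e1, e2, h1] at h2
  exact h2

lemma cdist_eq_iff [NeZero N] (i j : ZMod N) (d : ℕ) :
    cdist i j = d ↔ 2 * d ≤ N ∧ (j - i = (d : ZMod N) ∨ j - i = -(d : ZMod N)) := by
  have hN : 0 < N := Nat.pos_of_ne_zero (NeZero.ne N)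
  have hij : i - j = -(j - i) := by ring
  unfold cdist
  rw [hij]
  by_cases hw0 : j - i = 0
  · rw [hw0]
    simp only [neg_zero, ZMod.val_zero, Nat.min_self]
    constructor
    · rintro rfl
      exact ⟨by omega, Or.inl (by simp)⟩
    · rintro ⟨h2, h3⟩
      have hdN : d < N := by omega
      have hz : (d : ZMod N) = 0 := by
        rcases h3 with h | h
        · exact h.symm
        · simpa [neg_eq_zero] using h.symm
      have hv := ZMod.val_cast_of_lt (n := N) hdN
      rw [hz, ZMod.val_zero] at hv
      omega
  · have hv1 : 0 < (j - i).val := by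
      rcases Nat.eq_zero_or_pos (j - i).val with h | h
      · exact absurd ((ZMod.val_eq_zero _).1 h) hw0
      · exact h
    have hvN : (j - i).val < N := ZMod.val_lt _
    have hnegv : (-(j - i)).val = N - (j - i).val := by
      rw [ZMod.neg_val, if_neg hw0]
    rw [hnegv]
    constructor
    · intro hmin
      rcases le_total (N - (j - i).val) ((j - i).val) with h | h
      · rw [min_eq_left h] at hmin
        refine ⟨by omega, Or.inr ?_⟩
        have h5 : ((d : ℕ) : ZMod N) = (N : ZMod N) - (((j - i).val : ℕ) : ZMod N) := by
          rw [← hmin, Nat.cast_sub hvN.le]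
        rw [ZMod.natCast_self, ZMod.natCast_zmod_val] at h5
        rw [h5]; ring
      · rw [min_eq_right h] at hmin
        refine ⟨by omega, Or.inl ?_⟩
        rw [← hmin, ZMod.natCast_zmod_val]
    · rintro ⟨h2d, hor⟩
      have hdN : d < N := by omega
      have hdv : ((d : ZMod N)).val = d := ZMod.val_cast_of_lt hdN
      rcases hor with h | h
      · have : (j - i).val = d := by rw [h, hdv]
        omega
      · have h' : (-(j - i)).val = d := by rw [h, neg_neg, hdv]
        rw [hnegv] at h'
        omega

lemma Sc_eq [NeZero N] (A B : Finset (ZMod N)) (d : ℕ) :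
    Sc A B d = if 2 * d ≤ N then
      ∑ m ∈ ({(d : ZMod N), -(d : ZMod N)} : Finset (ZMod N)), Gc A B m else 0 := by
  split_ifs with h
  · have hfe : (A ×ˢ B).filter (fun p => cdist p.1 p.2 = d)
        = (A ×ˢ B).filter (fun p =>
            p.2 - p.1 ∈ ({(d : ZMod N), -(d : ZMod N)} : Finset (ZMod N))) := by
      apply filter_congr
      intro p _
      rw [cdist_eq_iff]
      simp [h]
    unfold Sc
    rw [hfe]
    rw [Finset.card_eq_sum_card_fiberwise (f := fun p : ZMod N × ZMod N => p.2 - p.1)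
      (t := ({(d : ZMod N), -(d : ZMod N)} : Finset (ZMod N)))
      (fun p hp => mem_coe.2 (mem_filter.1 (mem_coe.1 hp)).2)]
    refine Finset.sum_congr rfl fun m hm => ?_
    have he : ((A ×ˢ B).filter (fun p =>
          p.2 - p.1 ∈ ({(d : ZMod N), -(d : ZMod N)} : Finset (ZMod N)))).filter
        (fun p => p.2 - p.1 = m) = (A ×ˢ B).filter (fun p => p.2 - p.1 = m) := by
      ext p
      simp only [mem_filter]
      constructor
      · rintro ⟨⟨h1, _⟩, h3⟩; exact ⟨h1, h3⟩
      · rintro ⟨h1, h3⟩; exact ⟨⟨h1, h3 ▸ hm⟩, h3⟩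
    rw [he, card_prod_filter]
  · unfold Sc
    rw [Finset.filter_eq_empty_iff.2, card_empty]
    intro p _
    rw [cdist_eq_iff]
    tauto

lemma count_diffMS [NeZero N] (A B : Finset (ZMod N)) (d : ℕ) :
    Multiset.count d (diffMS A B) = Sc A B d := by
  have he : ((A ×ˢ B).filter fun p => d = cdist p.1 p.2)
      = (A ×ˢ B).filter fun p => cdist p.1 p.2 = d :=
    Finset.filter_congr fun p _ => eq_comm
  unfold diffMS Sc
  rw [Multiset.count_map, ← Finset.filter_val, he]
  rfl

lemma count_selfDiffMS [NeZero N] (A : Finset (ZMod N)) (d : ℕ) :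
    Multiset.count d (selfDiffMS A) = Hc A d := by
  have he : (((A ×ˢ A).filter fun p => p.1.val ≤ p.2.val).filter fun p => d = cdist p.1 p.2)
      = (A ×ˢ A).filter fun p => p.1.val ≤ p.2.val ∧ cdist p.1 p.2 = d := by
    rw [Finset.filter_filter]
    exact Finset.filter_congr fun p _ => by
      constructor
      · rintro ⟨h1, h2⟩; exact ⟨h1, h2.symm⟩
      · rintro ⟨h1, h2⟩; exact ⟨h1, h2.symm⟩
  unfold selfDiffMS Hc
  rw [Multiset.count_map, ← Finset.filter_val, he]
  rfl

lemma Hc_zero [NeZero N] (A : Finset (ZMod N)) : Hc A 0 = A.card := by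
  apply Finset.card_nbij' (fun p => p.1) (fun i => (i, i))
  · intro p hp
    simp only [mem_coe, mem_filter, mem_product] at hp
    exact hp.1.1
  · intro i hi
    simp only [mem_coe, mem_filter, mem_product]
    exact ⟨⟨hi, hi⟩, le_refl _, cdist_eq_zero_iff.2 rfl⟩
  · intro p hp
    simp only [mem_coe, mem_filter, mem_product] at hp
    exact Prod.ext rfl (cdist_eq_zero_iff.1 hp.2.2)
  · intro i _; rfl

lemma Sc_zero [NeZero N] (A : Finset (ZMod N)) : Sc A A 0 = A.card := by
  apply Finset.card_nbij' (fun p => p.1) (fun i => (i, i))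
  · intro p hp
    simp only [mem_coe, mem_filter, mem_product] at hp
    exact hp.1.1
  · intro i hi
    simp only [mem_coe, mem_filter, mem_product]
    exact ⟨⟨hi, hi⟩, cdist_eq_zero_iff.2 rfl⟩
  · intro p hp
    simp only [mem_coe, mem_filter, mem_product] at hp
    exact Prod.ext rfl (cdist_eq_zero_iff.1 hp.2)
  · intro i _; rfl

lemma Sc_eq_two_Hc [NeZero N] (A : Finset (ZMod N)) {d : ℕ} (hd : d ≠ 0) :
    Sc A A d = Hc A d + Hc A d := by
  classical
  set T := (A ×ˢ A).filter (fun p => cdist p.1 p.2 = d) with hT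
  have hsplit := Finset.card_filter_add_card_filter_not
    (s := T) (p := fun p : ZMod N × ZMod N => p.1.val ≤ p.2.val)
  have h1 : (T.filter fun p => p.1.val ≤ p.2.val).card = Hc A d := by
    unfold Hc
    congr 1
    rw [hT, Finset.filter_filter]
    apply Finset.filter_congr
    intro p _
    tauto
  have h2 : (T.filter fun p => ¬ p.1.val ≤ p.2.val).card
      = (T.filter fun p => p.1.val ≤ p.2.val).card := by
    apply Finset.card_nbij' Prod.swap Prod.swap
    · intro a ha
      simp only [hT, mem_coe, mem_filter, mem_product, Prod.fst_swap, Prod.snd_swap] at ha ⊢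
      refine ⟨⟨⟨ha.1.1.2, ha.1.1.1⟩, ?_⟩, by omega⟩
      rw [cdist_comm]; exact ha.1.2
    · intro b hb
      simp only [hT, mem_coe, mem_filter, mem_product, Prod.fst_swap, Prod.snd_swap] at hb ⊢
      have hne : b.1 ≠ b.2 := by
        intro h
        exact hd (by rw [← hb.1.2, h, cdist_eq_zero_iff.2 rfl])
      have hvne : b.1.val ≠ b.2.val := fun h => hne (ZMod.val_injective N h)
      refine ⟨⟨⟨hb.1.1.2, hb.1.1.1⟩, ?_⟩, by omega⟩
      rw [cdist_comm]; exact hb.1.2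
    · intro a _; exact Prod.swap_swap a
    · intro a _; exact Prod.swap_swap a
  show T.card = _
  omega

lemma homometric_iff [NeZero N] (A A' : Finset (ZMod N)) :
    Homometric A A' ↔ ∀ d, Sc A A d = Sc A' A' d := by
  constructor
  · intro hh d
    have hc : ∀ e, Hc A e = Hc A' e := fun e => by
      rw [← count_selfDiffMS, ← count_selfDiffMS, hh]
    by_cases hd : d = 0
    · subst hd
      rw [Sc_zero, Sc_zero, ← Hc_zero A, ← Hc_zero A', hc]
    · rw [Sc_eq_two_Hc A hd, Sc_eq_two_Hc A' hd, hc]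
  · intro hs
    rw [Homometric, Multiset.ext]
    intro d
    rw [count_selfDiffMS, count_selfDiffMS]
    by_cases hd : d = 0
    · subst hd
      rw [Hc_zero, Hc_zero, ← Sc_zero A, ← Sc_zero A', hs]
    · have h1 := Sc_eq_two_Hc A hd
      have h2 := Sc_eq_two_Hc A' hd
      have h3 := hs d
      omega

lemma Sc_iff_Gc [NeZero N] (A A' : Finset (ZMod N)) :
    (∀ d, Sc A A d = Sc A' A' d) ↔ (∀ ℓ, Gc A A ℓ = Gc A' A' ℓ) := by
  constructor
  · intro hs ℓ
    by_cases h0 : ℓ = 0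
    · subst h0
      rw [Gc_zero, Gc_zero, ← Sc_zero A, ← Sc_zero A', hs]
    · have hN : 0 < N := Nat.pos_of_ne_zero (NeZero.ne N)
      have hv0 : ℓ.val ≠ 0 := fun h => h0 ((ZMod.val_eq_zero _).1 h)
      have hvN : ℓ.val < N := ZMod.val_lt _
      -- find d with 2*d ≤ N and {↑d, -↑d} = {ℓ, -ℓ}
      obtain ⟨d, hdle, hdset⟩ : ∃ d : ℕ, 2 * d ≤ N ∧
          ({(d : ZMod N), -(d : ZMod N)} : Finset (ZMod N)) = {ℓ, -ℓ} := by
        rcases le_total ℓ.val (N - ℓ.val) with h | h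
        · refine ⟨ℓ.val, by omega, ?_⟩
          rw [ZMod.natCast_zmod_val]
        · refine ⟨N - ℓ.val, by omega, ?_⟩
          have hc : ((N - ℓ.val : ℕ) : ZMod N) = -ℓ := by
            rw [Nat.cast_sub hvN.le, ZMod.natCast_self, ZMod.natCast_zmod_val]
            ring
          rw [hc, neg_neg, Finset.pair_comm]
      have key : ∀ B : Finset (ZMod N), Sc B B d
          = ∑ m ∈ ({ℓ, -ℓ} : Finset (ZMod N)), Gc B B m := by
        intro B
        rw [Sc_eq, if_pos hdle, hdset]
      have hAe := key A
      have hA'e := key A'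
      by_cases hsym : ℓ = -ℓ
      · have hsing : ({ℓ, -ℓ} : Finset (ZMod N)) = {ℓ} := by
          rw [← hsym]; simp
        rw [hsing, Finset.sum_singleton] at hAe hA'e
        rw [← hAe, ← hA'e, hs]
      · rw [Finset.sum_pair hsym] at hAe hA'e
        have h1 := Gc_symm A ℓ
        have h2 := Gc_symm A' ℓ
        have h3 := hs d
        omega
  · intro hg d
    rw [Sc_eq, Sc_eq]
    split_ifs with h
    · exact Finset.sum_congr rfl fun m _ => hg m
    · rfl

lemma Gc_compl_eq [NeZero N] (A : Finset (ZMod N)) (ℓ : ZMod N) :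
    Gc Aᶜ Aᶜ ℓ + A.card = Gc A A ℓ + Aᶜ.card := by
  have h1 := P1 A A ℓ
  have h2 := P2 A Aᶜ ℓ
  omega

lemma M_compl [NeZero N] (A A' : Finset (ZMod N)) :
    (∀ ℓ, Gc Aᶜ Aᶜ ℓ = Gc A'ᶜ A'ᶜ ℓ) ↔ (∀ ℓ, Gc A A ℓ = Gc A' A' ℓ) := by
  have hN1 := Finset.card_add_card_compl A
  have hN2 := Finset.card_add_card_compl A'
  constructor
  · intro h ℓ
    have hc : Aᶜ.card = A'ᶜ.card := by
      have := h 0; rwa [Gc_zero, Gc_zero] at this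
    have e1 := Gc_compl_eq A ℓ
    have e2 := Gc_compl_eq A' ℓ
    have e3 := h ℓ
    omega
  · intro h ℓ
    have hc : A.card = A'.card := by
      have := h 0; rwa [Gc_zero, Gc_zero] at this
    have e1 := Gc_compl_eq A ℓ
    have e2 := Gc_compl_eq A' ℓ
    have e3 := h ℓ
    omega

lemma alpha_ne_beta {α β : ℝ} (hgen : LinearIndependent ℚ ![α ^ 2, β ^ 2, α * β]) :
    α ≠ β := by
  intro h
  rw [Fintype.linearIndependent_iff] at hgen
  have h0 := hgen ![1, -1, 0] ?_ 0
  · norm_num at h0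
  · rw [Fin.sum_univ_three]
    simp [h]

lemma mem_levelSet [NeZero N] (x : ZMod N → ℝ) (a : ℝ) (n : ZMod N) :
    n ∈ levelSet x a ↔ x n = a := by
  simp [levelSet]

lemma levelSet_beta_compl [NeZero N] {x : ZMod N → ℝ} {α β : ℝ}
    (hx : ∀ n, x n = α ∨ x n = β) (hab : α ≠ β) :
    levelSet x β = (levelSet x α)ᶜ := by
  ext n
  rw [Finset.mem_compl, mem_levelSet, mem_levelSet]
  rcases hx n with h | h <;> simp [h, hab, Ne.symm hab]

lemma univ_filter_and [NeZero N] (S : Finset (ZMod N)) (Q : ZMod N → Prop) [DecidablePred Q] :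
    ((univ : Finset (ZMod N)).filter fun n => n ∈ S ∧ Q n) = S.filter Q := by
  ext n; simp

lemma autocorr_eq [NeZero N] {x : ZMod N → ℝ} {α β : ℝ}
    (hx : ∀ n, x n = α ∨ x n = β) (hab : α ≠ β) (ℓ : ZMod N) :
    autocorr x ℓ = (Gc (levelSet x α) (levelSet x α) ℓ : ℝ) * α ^ 2
      + ((Gc (levelSet x α) (levelSet x α)ᶜ ℓ : ℝ) + (Gc (levelSet x α)ᶜ (levelSet x α) ℓ : ℝ)) * (α * β)
      + (Gc (levelSet x α)ᶜ (levelSet x α)ᶜ ℓ : ℝ) * β ^ 2 := by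
  set A := levelSet x α with hA
  have key : ∀ n : ZMod N, x n * x (n + ℓ)
      = (if n ∈ A ∧ n + ℓ ∈ A then α ^ 2 else 0)
      + ((if n ∈ A ∧ n + ℓ ∈ Aᶜ then α * β else 0)
      + ((if n ∈ Aᶜ ∧ n + ℓ ∈ A then α * β else 0)
      + (if n ∈ Aᶜ ∧ n + ℓ ∈ Aᶜ then β ^ 2 else 0))) := by
    intro n
    have h1 : n ∈ A ↔ x n = α := mem_levelSet x α n
    have h2 : n + ℓ ∈ A ↔ x (n + ℓ) = α := mem_levelSet x α (n + ℓ)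
    rcases hx n with h | h <;> rcases hx (n + ℓ) with h' | h' <;>
      simp [Finset.mem_compl, h1, h2, h, h', hab, Ne.symm hab] <;> ring
  rw [autocorr, Finset.sum_congr rfl fun n _ => key n]
  rw [Finset.sum_add_distrib, Finset.sum_add_distrib, Finset.sum_add_distrib]
  rw [← Finset.sum_filter, ← Finset.sum_filter, ← Finset.sum_filter, ← Finset.sum_filter]
  rw [Finset.sum_const, Finset.sum_const, Finset.sum_const, Finset.sum_const]
  rw [univ_filter_and A (fun n => n + ℓ ∈ A), univ_filter_and A (fun n => n + ℓ ∈ Aᶜ),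
    univ_filter_and Aᶜ (fun n => n + ℓ ∈ A), univ_filter_and Aᶜ (fun n => n + ℓ ∈ Aᶜ)]
  show (Gc A A ℓ : ℕ) • α ^ 2 + ((Gc A Aᶜ ℓ : ℕ) • (α * β) + ((Gc Aᶜ A ℓ : ℕ) • (α * β)
    + (Gc Aᶜ Aᶜ ℓ : ℕ) • β ^ 2)) = _
  push_cast [nsmul_eq_mul]
  ring

lemma autocorr_iff [NeZero N] {x x' : ZMod N → ℝ} {α β : ℝ}
    (hgen : LinearIndependent ℚ ![α ^ 2, β ^ 2, α * β])
    (hx : ∀ n, x n = α ∨ x n = β) (hx' : ∀ n, x' n = α ∨ x' n = β) :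
    autocorr x = autocorr x'
      ↔ ∀ ℓ, Gc (levelSet x α) (levelSet x α) ℓ = Gc (levelSet x' α) (levelSet x' α) ℓ := by
  have hab : α ≠ β := alpha_ne_beta hgen
  set A := levelSet x α with hA
  set A' := levelSet x' α with hA'
  constructor
  · intro h ℓ
    have e := congrFun h ℓ
    rw [autocorr_eq hx hab ℓ, autocorr_eq hx' hab ℓ] at e
    rw [Fintype.linearIndependent_iff] at hgen
    have h0 := hgen ![(Gc A A ℓ : ℚ) - (Gc A' A' ℓ : ℚ),
        (Gc Aᶜ Aᶜ ℓ : ℚ) - (Gc A'ᶜ A'ᶜ ℓ : ℚ),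
        ((Gc A Aᶜ ℓ : ℚ) + (Gc Aᶜ A ℓ : ℚ)) - ((Gc A' A'ᶜ ℓ : ℚ) + (Gc A'ᶜ A' ℓ : ℚ))] ?_ 0
    · have : (Gc A A ℓ : ℚ) = (Gc A' A' ℓ : ℚ) := by
        have := h0
        simp only [Matrix.cons_val_zero] at this
        linarith
      exact_mod_cast this
    · rw [Fin.sum_univ_three]
      simp only [Matrix.cons_val_zero, Matrix.cons_val_one, Matrix.head_cons,
        Matrix.cons_val_two, Matrix.tail_cons]
      rw [Rat.smul_def, Rat.smul_def, Rat.smul_def]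
      push_cast
      linear_combination e
  · intro hg
    funext ℓ
    rw [autocorr_eq hx hab ℓ, autocorr_eq hx' hab ℓ]
    have hcard : A.card = A'.card := by
      have := hg 0; rwa [Gc_zero, Gc_zero] at this
    have hccard : Aᶜ.card = A'ᶜ.card := by
      have h1 := Finset.card_add_card_compl A
      have h2 := Finset.card_add_card_compl A'
      omega
    have hb : Gc A Aᶜ ℓ = Gc A' A'ᶜ ℓ := by
      have h1 := P1 A A ℓ; have h2 := P1 A' A' ℓ; have := hg ℓ; omega
    have hc : Gc Aᶜ A ℓ = Gc A'ᶜ A' ℓ := by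
      have h1 := P2 A A ℓ; have h2 := P2 A' A' ℓ; have := hg ℓ; omega
    have he : Gc Aᶜ Aᶜ ℓ = Gc A'ᶜ A'ᶜ ℓ := by
      have h1 := P2 A Aᶜ ℓ; have h2 := P2 A' A'ᶜ ℓ; omega
    rw [hg ℓ, hb, hc, he]


lemma diffMS_congr [NeZero N] {S T S' T' : Finset (ZMod N)}
    (hG : ∀ m, Gc S T m = Gc S' T' m) : diffMS S T = diffMS S' T' := by
  rw [Multiset.ext]
  intro d
  rw [count_diffMS, count_diffMS, Sc_eq, Sc_eq]
  split_ifs with h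
  · exact Finset.sum_congr rfl fun m _ => hG m
  · rfl

lemma homometricPart_iff [NeZero N] (A A' : Finset (ZMod N)) :
    HomometricPart ![A, Aᶜ] ![A', A'ᶜ] ↔ (∀ ℓ, Gc A A ℓ = Gc A' A' ℓ) := by
  constructor
  · intro h
    apply (Sc_iff_Gc A A').1
    intro d
    have h0 := h 0 0
    simp only [Matrix.cons_val_zero] at h0
    rw [← count_diffMS, ← count_diffMS, h0]
  · intro hg
    have hcard : A.card = A'.card := by
      have := hg 0; rwa [Gc_zero, Gc_zero] at this
    have hccard : Aᶜ.card = A'ᶜ.card := by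
      have h1 := Finset.card_add_card_compl A
      have h2 := Finset.card_add_card_compl A'
      omega
    have hb : ∀ m, Gc A Aᶜ m = Gc A' A'ᶜ m := fun m => by
      have h1 := P1 A A m; have h2 := P1 A' A' m; have := hg m; omega
    have hc : ∀ m, Gc Aᶜ A m = Gc A'ᶜ A' m := fun m => by
      have h1 := P2 A A m; have h2 := P2 A' A' m; have := hg m; omega
    have he : ∀ m, Gc Aᶜ Aᶜ m = Gc A'ᶜ A'ᶜ m := fun m => by
      have h1 := P2 A Aᶜ m; have h2 := P2 A' A'ᶜ m; have := hb m; omega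
    intro i j
    fin_cases i <;> fin_cases j <;>
      simp only [Matrix.cons_val_zero, Matrix.cons_val_one, Matrix.head_cons, Fin.isValue] <;>
      apply diffMS_congr
    exacts [hg, hb, hc, he]

end TAP

/-- two-alphabet phase retrieval: for generic `α, β`, the four
conditions (i)-(iv) are equivalent. -/
theorem two_alphabet_phase_retrieval (N : ℕ) [NeZero N] (α β : ℝ)
    (hgen : LinearIndependent ℚ ![α ^ 2, β ^ 2, α * β])
    (x x' : ZMod N → ℝ)
    (hx : ∀ n, x n = α ∨ x n = β) (hx' : ∀ n, x' n = α ∨ x' n = β) :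
    (autocorr x = autocorr x' ↔ Homometric (levelSet x α) (levelSet x' α)) ∧
    (autocorr x = autocorr x' ↔ Homometric (levelSet x β) (levelSet x' β)) ∧
    (autocorr x = autocorr x' ↔
      HomometricPart ![levelSet x α, levelSet x β] ![levelSet x' α, levelSet x' β]) := by
  have hab : α ≠ β := TAP.alpha_ne_beta hgen
  have hBx : levelSet x β = (levelSet x α)ᶜ := TAP.levelSet_beta_compl hx hab
  have hBx' : levelSet x' β = (levelSet x' α)ᶜ := TAP.levelSet_beta_compl hx' hab
  have hauto := TAP.autocorr_iff hgen hx hx'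
  have hhomA := (TAP.homometric_iff (levelSet x α) (levelSet x' α)).trans
    (TAP.Sc_iff_Gc (levelSet x α) (levelSet x' α))
  refine ⟨hauto.trans hhomA.symm, ?_, ?_⟩
  · rw [hBx, hBx']
    exact hauto.trans ((((TAP.homometric_iff _ _).trans (TAP.Sc_iff_Gc _ _)).trans
      (TAP.M_compl _ _)).symm)
  · rw [hBx, hBx']
    exact hauto.trans (TAP.homometricPart_iff _ _).symm
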